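/- Let D (records) and V (predicates) be nonempty measurable spaces, let η ≥ 0, let P be a probability measure on D, let e : D × V → {0,1} be jointly measurable, let ρ be a Markov kernel from D to V, and let ν be a probability measure on V such that for every z ∈ D and every measurable set E ⊆ V, (ρ(z))(E) ≤ ν(E) + η. Then ∫_D ρ(z)({v ∈ V : e(z,v) = 1}) dP(z) − sup_{v ∈ V} P({z ∈ D : e(z,v) = 1}) ≤ η. -/

import Mathlib

open MeasureTheory ProbabilityTheory

/-- SPSO bullet of Theorem 5: `η`-TV privacy bounds the strong
predicate-singling-out advantage by `η`. `e z v = true` means predicate `v`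
matches record `z`. -/
theorem stmt_8 {D V : Type*} [MeasurableSpace D] [MeasurableSpace V]
    [Nonempty D] [Nonempty V]
    (η : ℝ) (hη : 0 ≤ η)
    (P : Measure D) [IsProbabilityMeasure P]
    (e : D → V → Bool) (he : Measurable (Function.uncurry e))
    (ρ : Kernel D V) [IsMarkovKernel ρ]
    (ν : Measure V) [IsProbabilityMeasure ν]
    (hTV : ∀ z : D, ∀ E : Set V, MeasurableSet E → (ρ z) E ≤ ν E + ENNReal.ofReal η) :
    (∫ z, ((ρ z) {v : V | e z v = true}).toReal ∂P) -
      (⨆ v : V, (P {z : D | e z v = true}).toReal) ≤ η := by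
  set S : Set (D × V) := Function.uncurry e ⁻¹' {true} with hSdef
  have hS : MeasurableSet S := he (measurableSet_singleton true)
  set C : ℝ := ⨆ v : V, (P {z : D | e z v = true}).toReal with hC
  have hbdd : BddAbove (Set.range fun v : V => (P {z : D | e z v = true}).toReal) := by
    refine ⟨1, ?_⟩
    rintro x ⟨v, rfl⟩
    calc (P {z | e z v = true}).toReal
        ≤ (P Set.univ).toReal :=
          ENNReal.toReal_mono (measure_ne_top _ _) (measure_mono (Set.subset_univ _))
      _ = 1 := by simp
  have hC0 : 0 ≤ C := Real.iSup_nonneg fun v => ENNReal.toReal_nonneg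
  have hPv : ∀ v : V, P {z : D | e z v = true} ≤ ENNReal.ofReal C := by
    intro v
    have h1 : (P {z : D | e z v = true}).toReal ≤ C := le_ciSup hbdd v
    calc P {z : D | e z v = true}
        = ENNReal.ofReal (P {z : D | e z v = true}).toReal :=
          (ENNReal.ofReal_toReal (measure_ne_top _ _)).symm
      _ ≤ ENNReal.ofReal C := ENNReal.ofReal_le_ofReal h1
  have hprod : ∫⁻ z, ν (Prod.mk z ⁻¹' S) ∂P ≤ ENNReal.ofReal C := by
    rw [← Measure.prod_apply hS, Measure.prod_apply_symm hS]
    calc ∫⁻ v, P ((fun z => (z, v)) ⁻¹' S) ∂ν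
        ≤ ∫⁻ _v, ENNReal.ofReal C ∂ν := by
          refine lintegral_mono fun v => ?_
          have hset : (fun z => (z, v)) ⁻¹' S = {z : D | e z v = true} := rfl
          rw [hset]; exact hPv v
      _ = ENNReal.ofReal C := by simp
  have hmeasρ : Measurable fun z => ρ z (Prod.mk z ⁻¹' S) :=
    Kernel.measurable_kernel_prodMk_left hS
  have hlint : ∫⁻ z, ρ z (Prod.mk z ⁻¹' S) ∂P ≤ ENNReal.ofReal (C + η) := by
    calc ∫⁻ z, ρ z (Prod.mk z ⁻¹' S) ∂P
        ≤ ∫⁻ z, (ν (Prod.mk z ⁻¹' S) + ENNReal.ofReal η) ∂P :=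
          lintegral_mono fun z => hTV z _ (measurable_prodMk_left hS)
      _ = ∫⁻ z, ν (Prod.mk z ⁻¹' S) ∂P + ENNReal.ofReal η := by
          rw [lintegral_add_right _ measurable_const, lintegral_const, measure_univ, mul_one]
      _ ≤ ENNReal.ofReal C + ENNReal.ofReal η := add_le_add_left hprod _
      _ = ENNReal.ofReal (C + η) := (ENNReal.ofReal_add hC0 hη).symm
  have hint : (∫ z, ((ρ z) {v : V | e z v = true}).toReal ∂P)
      = (∫⁻ z, ρ z (Prod.mk z ⁻¹' S) ∂P).toReal :=
    integral_toReal hmeasρ.aemeasurable (ae_of_all _ fun z => measure_lt_top _ _)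
  have hfinal : (∫ z, ((ρ z) {v : V | e z v = true}).toReal ∂P) ≤ C + η := by
    rw [hint]
    exact ENNReal.toReal_le_of_le_ofReal (by linarith) hlint
  linarith
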